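/- Let λ be an ordinal, let <_X be an iteration tree order on λ, and let t assign to each ordinal ζ with ζ+1 < λ a value in {0,1}. Let S be the smallest subset of the ordinals below λ that contains 0, contains ζ+1 whenever t(ζ) = 1, and contains every limit ordinal μ < λ in which S ∩ μ is cofinal; let (λ^α)_{α<ι} be the strictly increasing enumeration of S, let L^α be the ordinal interval [λ^α, λ^{α+1}) (and L^α = [λ^α, λ) if α+1 = ι), and for δ < λ let η_δ be the unique α < ι with δ ∈ L^α. Define the relation <_{X/T} on ι by the recursion: β <_{X/T} α iff there is δ <_X λ^α with β ≤_{X/T} η_δ (where β ≤_{X/T} η means β = η or β <_{X/T} η); this recursion is legitimate because δ <_X λ^α implies η_δ < α. Then: (i) <_{X/T} is transitive; (ii) β <_{X/T} α implies β < α; (iii) if α < ι is a limit ordinal then {β : β <_{X/T} α} is cofinal in α. -/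

import Mathlib

universe u

/-- `r` is an iteration tree order on the ordinals below `l`:  a strict partial order such
that (i) `r β α → β < α`; (ii) `r 0 α` for all `0 < α < l`; (iii) each branch `[0, α)_r` is
linearly ordered by `r`; (iv) for each successor `α + 1 < l` the branch `[0, α + 1)_r` has an
`r`-greatest element; (v) for each limit `α < l` the branch `[0, α)_r` is cofinal in `α` and
closed in `α`. -/
structure IsTreeOrder (l : Ordinal.{u}) (r : Ordinal.{u} → Ordinal.{u} → Prop) : Prop where
  lt_of_rel : ∀ {α β}, r α β → α < β
  lt_len : ∀ {α β}, r α β → β < l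
  zero_rel : ∀ {α}, 0 < α → α < l → r 0 α
  rel_trans : ∀ {α β γ}, r α β → r β γ → r α γ
  branch_linear : ∀ {α β γ}, r α γ → r β γ → r α β ∨ α = β ∨ r β α
  pred_exists : ∀ {α}, α + 1 < l → ∃ p, r p (α + 1) ∧ ∀ γ, r γ (α + 1) → γ = p ∨ r γ p
  limit_cofinal : ∀ {α}, α < l → Order.IsSuccLimit α → ∀ γ < α, ∃ β, γ ≤ β ∧ r β α
  limit_closed : ∀ {α}, α < l → Order.IsSuccLimit α → ∀ {μ}, Order.IsSuccLimit μ → μ < α →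
    (∀ γ < μ, ∃ β, γ ≤ β ∧ β < μ ∧ r β α) → r μ α

/-- `S` contains `0`, contains `ζ + 1` whenever `t ζ = true` (and `ζ + 1 < l`), and contains
every limit ordinal `μ < l` in which `S ∩ μ` is cofinal. -/
def SClosed (l : Ordinal.{u}) (t : Ordinal.{u} → Bool) (S : Set Ordinal.{u}) : Prop :=
  (0 < l → 0 ∈ S) ∧
    (∀ ζ, ζ + 1 < l → t ζ = true → ζ + 1 ∈ S) ∧
    ∀ μ, μ < l → Order.IsSuccLimit μ → (∀ γ < μ, ∃ β, γ ≤ β ∧ β < μ ∧ β ∈ S) → μ ∈ S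

/-- The smallest subset of the ordinals below `l` which contains `0`, contains `ζ + 1`
whenever `t ζ = true`, and contains every limit ordinal `μ < l` in which it is cofinal.
(It is automatically contained in `Set.Iio l` since `Set.Iio l` is closed under the rules.) -/
def InS (l : Ordinal.{u}) (t : Ordinal.{u} → Bool) : Set Ordinal.{u} :=
  ⋂₀ {S | SClosed l t S}

/-- Let `rX` be an iteration tree order on `l` and let `t` assign to each `ζ` with
`ζ + 1 < l` a value in `{0, 1}` (here: a boolean).  Let `e = (λ^α)_{α < ι}` be the strictly
increasing enumeration of the set `S = InS l t`, for `δ < l` let `η δ` be the unique `α < ι`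
with `δ` in the interval `L^α = [e α, e (α + 1))` (resp. `[e α, l)` if `α + 1 = ι`), and let
`rF` be the factor tree relation `<_{X/T}` on `ι`, defined by the recursion
`β <_F α ↔ ∃ δ <_X e α, β ≤_F η δ`.  Then the recursion is legitimate
(`δ <_X e α → η δ < α`), and: (i) `rF` is transitive; (ii) `β <_F α → β < α`; (iii) if
`α < ι` is a limit ordinal then `{β : β <_F α}` is cofinal in `α`. -/
theorem factorTreeOrder_basic
    {l ι : Ordinal.{u}} {rX : Ordinal.{u} → Ordinal.{u} → Prop} {t : Ordinal.{u} → Bool}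
    (hX : IsTreeOrder l rX)
    (e η : Ordinal.{u} → Ordinal.{u}) (rF : Ordinal.{u} → Ordinal.{u} → Prop)
    (he_mem : ∀ α < ι, e α ∈ InS l t)
    (he_mono : ∀ α β, α < β → β < ι → e α < e β)
    (he_surj : ∀ s ∈ InS l t, ∃ α < ι, e α = s)
    (hη : ∀ δ < l, η δ < ι ∧ e (η δ) ≤ δ ∧ (η δ + 1 < ι → δ < e (η δ + 1)))
    (hdom : ∀ β α, rF β α → α < ι)
    (hrF : ∀ α < ι, ∀ β, rF β α ↔ ∃ δ, rX δ (e α) ∧ (β = η δ ∨ rF β (η δ))) :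
    (∀ α < ι, ∀ δ, rX δ (e α) → η δ < α) ∧
      (∀ α β γ, rF γ β → rF β α → rF γ α) ∧
      (∀ α β, rF β α → β < α) ∧
      ∀ α < ι, Order.IsSuccLimit α → ∀ γ < α, ∃ β, γ ≤ β ∧ rF β α := by
  -- `InS l t` is itself `SClosed`
  have hInS_closed : SClosed l t (InS l t) := by
    refine ⟨fun h0 S hS => hS.1 h0, fun ζ hζ ht S hS => hS.2.1 ζ hζ ht, ?_⟩
    intro μ hμ hlim hcof S hS
    exact hS.2.2 μ hμ hlim fun γ hγ => by
      obtain ⟨β, h1, h2, h3⟩ := hcof γ hγ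
      exact ⟨β, h1, h2, h3 S hS⟩
  -- `InS l t ⊆ Set.Iio l`
  have hInS_lt : ∀ s ∈ InS l t, s < l := by
    intro s hs
    have : SClosed l t (Set.Iio l) :=
      ⟨fun h0 => h0, fun ζ hζ _ => hζ, fun μ hμ _ _ => hμ⟩
    exact hs _ this
  have he_lt : ∀ α < ι, e α < l := fun α hα => hInS_lt _ (he_mem α hα)
  have he_mono_le : ∀ α β, α ≤ β → β < ι → e α ≤ e β := by
    intro α β hab hβ
    rcases hab.lt_or_eq with h | rfl
    · exact (he_mono α β h hβ).le
    · exact le_rfl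
  -- legitimacy of the recursion
  have part0 : ∀ α < ι, ∀ δ, rX δ (e α) → η δ < α := by
    intro α hα δ hδ
    have hδl : δ < l := (hX.lt_of_rel hδ).trans (he_lt α hα)
    obtain ⟨hηι, hle, -⟩ := hη δ hδl
    by_contra h
    push_neg at h
    exact absurd ((he_mono_le α (η δ) h hηι).trans hle) (not_le.mpr (hX.lt_of_rel hδ))
  -- transitivity
  have htrans : ∀ α β γ, rF γ β → rF β α → rF γ α := by
    intro α
    induction α using Ordinal.induction with
    | h α IH =>
      intro β γ hgb hba
      have hαι : α < ι := hdom β α hba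
      obtain ⟨δ, hδ, hc⟩ := (hrF α hαι β).mp hba
      refine (hrF α hαι γ).mpr ⟨δ, hδ, Or.inr ?_⟩
      rcases hc with rfl | h
      · exact hgb
      · exact IH _ (part0 α hαι δ hδ) _ _ hgb h
  -- `rF` implies `<`
  have hlt : ∀ α β, rF β α → β < α := by
    intro α
    induction α using Ordinal.induction with
    | h α IH =>
      intro β hba
      have hαι : α < ι := hdom β α hba
      obtain ⟨δ, hδ, hc⟩ := (hrF α hαι β).mp hba
      have hηα : η δ < α := part0 α hαι δ hδ
      rcases hc with rfl | h
      · exact hηα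
      · exact (IH _ hηα β h).trans hηα
  refine ⟨part0, htrans, hlt, ?_⟩
  -- cofinality at limits
  intro α hα hlim γ hγ
  -- first: `e α` is the sup of the earlier `e ζ`, hence a limit ordinal
  set s : Ordinal := sSup (e '' Set.Iio α) with hs
  have hbdd : BddAbove (e '' Set.Iio α) := by
    refine ⟨e α, fun x hx => ?_⟩
    obtain ⟨ζ, hζ, rfl⟩ := hx
    exact (he_mono ζ α hζ hα).le
  have hle_s : ∀ ζ < α, e ζ ≤ s := fun ζ hζ => le_csSup hbdd ⟨ζ, hζ, rfl⟩
  have hlt_s : ∀ ζ < α, e ζ < s := by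
    intro ζ hζ
    have h1 : ζ + 1 < α := by
      have := hlim.succ_lt hζ
      rwa [← Ordinal.add_one_eq_succ] at this
    exact (he_mono ζ (ζ + 1) (lt_add_one ζ) (h1.trans hα)).trans_le (hle_s _ h1)
  have hne : (e '' Set.Iio α).Nonempty := ⟨e 0, Set.mem_image_of_mem e hlim.pos⟩
  have hs_le : s ≤ e α := csSup_le hne fun x hx => by
    obtain ⟨ζ, hζ, rfl⟩ := hx
    exact (he_mono ζ α hζ hα).le
  have hex_lt : ∀ x < s, ∃ ζ < α, x < e ζ := by
    intro x hx
    obtain ⟨y, hy, hxy⟩ := exists_lt_of_lt_csSup hne hx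
    obtain ⟨ζ, hζ, rfl⟩ := hy
    exact ⟨ζ, hζ, hxy⟩
  have hs_lim : Order.IsSuccLimit s := by
    rw [Ordinal.isSuccLimit_iff, Order.isSuccPrelimit_iff_succ_lt]
    constructor
    · exact ((zero_le (a := e 0)).trans_lt (hlt_s 0 hlim.pos)).ne'
    · intro x hx
      obtain ⟨ζ, hζ, hxζ⟩ := hex_lt x hx
      exact (Order.succ_le_of_lt hxζ).trans_lt (hlt_s ζ hζ)
  have hs_mem : s ∈ InS l t := by
    refine hInS_closed.2.2 s (hs_le.trans_lt (he_lt α hα)) hs_lim ?_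
    intro x hx
    obtain ⟨ζ, hζ, hxζ⟩ := hex_lt x hx
    exact ⟨e ζ, hxζ.le, hlt_s ζ hζ, he_mem ζ (hζ.trans hα)⟩
  have hs_eq : s = e α := by
    refine hs_le.antisymm ?_
    by_contra hcon
    push_neg at hcon
    obtain ⟨β, hβι, hβ⟩ := he_surj s hs_mem
    have hβα : β < α := by
      by_contra h
      push_neg at h
      have h2 := he_mono_le α β h hβι
      rw [hβ] at h2
      exact absurd h2 (not_le.mpr hcon)
    have h3 := hlt_s β hβα
    rw [hβ] at h3
    exact absurd h3 (lt_irrefl s)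
  have heα_lim : Order.IsSuccLimit (e α) := hs_eq ▸ hs_lim
  -- now use cofinality of the branch `[0, e α)_X`
  obtain ⟨δ, hγδ, hδ⟩ := hX.limit_cofinal (he_lt α hα) heα_lim (e γ) (he_mono γ α hγ hα)
  have hδl : δ < l := (hX.lt_of_rel hδ).trans (he_lt α hα)
  obtain ⟨hηι, hle, hub⟩ := hη δ hδl
  refine ⟨η δ, ?_, (hrF α hα (η δ)).mpr ⟨δ, hδ, Or.inl rfl⟩⟩
  by_contra h
  push_neg at h
  have h1 : η δ + 1 ≤ γ := by
    rw [Ordinal.add_one_eq_succ]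
    exact Order.succ_le_of_lt h
  have h2 : e (η δ + 1) ≤ e γ := he_mono_le _ _ h1 (hγ.trans hα)
  exact absurd ((hub (h1.trans_lt (hγ.trans hα))).trans_le (h2.trans hγδ)) (lt_irrefl _)
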